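/- For every ℓ ≥ 1 and every permutation σ ∈ S_ℓ written as the word σ_1⋯σ_ℓ, the coefficient π_ℓ satisfies the reversal symmetry π_ℓ(σ_1⋯σ_ℓ) = (-1)^{ℓ+1} π_ℓ(σ_ℓ⋯σ_1). -/

import Mathlib

/-- The coefficient `π_ℓ` evaluated on the word `σ(1)σ(2)⋯σ(ℓ)` (letters `0,…,ℓ-1`),
defined inductively: value `1` on a single letter; if the word starts with the
smallest letter `0`, recurse on the remaining (shifted) word; if it ends with `0`,
recurse with a sign change; otherwise the value is `0`. -/
def piW : List ℕ → ℤ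
  | [] => 0
  | [_] => 1
  | a :: b :: l =>
    if a = 0 then piW ((b :: l).map (· - 1))
    else if (a :: b :: l).getLast? = some 0 then
      - piW ((a :: b :: l).dropLast.map (· - 1))
    else 0
termination_by w => w.length
decreasing_by all_goals (simp; try omega)


lemma piW_eval' (a : ℕ) (l : List ℕ) (h : l ≠ []) :
    piW (a :: l) = if a = 0 then piW (l.map (· - 1))
      else if (a :: l).getLast? = some 0 then
        - piW ((a :: l).dropLast.map (· - 1))
      else 0 := by
  cases l with
  | nil => exact absurd rfl h
  | cons b t => rw [piW]

lemma app_ne {α : Type*} (l : List α) (c : α) : l ++ [c] ≠ [] := by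
  cases l <;> simp

lemma nodup_map_sub_one {l : List ℕ} (h : l.Nodup) (h0 : ∀ x ∈ l, x ≠ 0) :
    (l.map (· - 1)).Nodup := by
  refine h.map_on ?_
  intro x hx y hy hxy
  have hx0 := h0 x hx
  have hy0 := h0 y hy
  omega

lemma piW_rev : ∀ (w : List ℕ), w.Nodup → w ≠ [] →
    piW w = (-1) ^ (w.length + 1) * piW w.reverse
  | [a], _, _ => by simp [piW]
  | a :: b :: l, hnd, _ => by
    obtain ⟨m, c, hm⟩ : ∃ m c, b :: l = m ++ [c] :=
      ⟨(b :: l).dropLast, (b :: l).getLast (by simp), (List.dropLast_append_getLast (by simp)).symm⟩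
    have hlen : m.length = l.length := by
      have := congrArg List.length hm; simp at this; omega
    rw [hm] at hnd ⊢
    have hw : (a :: (m ++ [c])).reverse = c :: (m.reverse ++ [a]) := by simp
    have hL : (a :: (m ++ [c])).length = m.length + 2 := by simp
    by_cases ha : a = 0
    · -- head is 0
      have h0m : ∀ x ∈ m ++ [c], x ≠ 0 := by
        intro x hx h
        rw [ha] at hnd
        exact (List.nodup_cons.1 hnd).1 (h ▸ hx)
      have hc : c ≠ 0 := h0m c (by simp)
      set t := (m ++ [c]).map (· - 1) with ht
      have h1 : piW (a :: (m ++ [c])) = piW t := by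
        rw [piW_eval' _ _ (app_ne m c), if_pos ha]
      have h2 : piW ((a :: (m ++ [c])).reverse) = - piW t.reverse := by
        rw [hw, piW_eval' _ _ (app_ne m.reverse a), if_neg hc]
        have hg : (c :: (m.reverse ++ [a])).getLast? = some a := List.getLast?_concat (l := c :: m.reverse)
        rw [hg, if_pos (by rw [ha])]
        have hd : (c :: (m.reverse ++ [a])).dropLast = c :: m.reverse := by
          show ((c :: m.reverse) ++ [a]).dropLast = c :: m.reverse
          exact List.dropLast_concat
        rw [hd]
        congr 1
        rw [ht, ← List.map_reverse]
        simp
      have hIH := piW_rev t (nodup_map_sub_one hnd.of_cons h0m) (by simp [ht])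
      rw [h1, h2, hIH, hL]
      have hl : t.length = m.length + 1 := by simp [ht]
      rw [hl]
      ring
    · by_cases hc : c = 0
      · -- last is 0
        have h0m : ∀ x ∈ a :: m, x ≠ 0 := by
          intro x hx hx0
          subst hx0
          rcases List.mem_cons.1 hx with h | h
          · exact ha h.symm
          · have hnd' := hnd.of_cons
            rw [hc] at hnd'
            rw [List.nodup_append] at hnd'
            exact hnd'.2.2 0 h 0 (by simp) rfl
        have hsub : (a :: m).Nodup := by
          refine List.Nodup.sublist ?_ hnd
          exact (List.sublist_append_left m [c]).cons_cons a
        set t := (a :: m).map (· - 1) with ht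
        have h1 : piW (a :: (m ++ [c])) = - piW t := by
          rw [piW_eval' _ _ (app_ne m c), if_neg ha]
          have hg : (a :: (m ++ [c])).getLast? = some c := List.getLast?_concat (l := a :: m)
          rw [hg, if_pos (by rw [hc])]
          have hd : (a :: (m ++ [c])).dropLast = a :: m := by
            show ((a :: m) ++ [c]).dropLast = a :: m
            exact List.dropLast_concat
          rw [hd]
        have h2 : piW ((a :: (m ++ [c])).reverse) = piW t.reverse := by
          rw [hw, piW_eval' _ _ (app_ne m.reverse a), if_pos hc]
          congr 1
          rw [ht, ← List.map_reverse]
          simp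
        have hIH := piW_rev t (nodup_map_sub_one hsub h0m) (by simp [ht])
        rw [h1, h2, hIH, hL]
        have hl : t.length = m.length + 1 := by simp [ht]
        rw [hl]
        ring
      · -- neither end is 0
        have h1 : piW (a :: (m ++ [c])) = 0 := by
          rw [piW_eval' _ _ (app_ne m c), if_neg ha]
          have hg : (a :: (m ++ [c])).getLast? = some c := List.getLast?_concat (l := a :: m)
          rw [hg, if_neg (by simpa using hc)]
        have h2 : piW ((a :: (m ++ [c])).reverse) = 0 := by
          rw [hw, piW_eval' _ _ (app_ne m.reverse a), if_neg hc]
          have hg : (c :: (m.reverse ++ [a])).getLast? = some a := List.getLast?_concat (l := c :: m.reverse)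
          rw [hg, if_neg (by simpa using ha)]
        rw [h1, h2, mul_zero]
termination_by w => w.length
decreasing_by all_goals
  (simp only [ht, List.length_map, List.length_append, List.length_cons,
    List.length_singleton, List.length_nil]; omega)

/-- `π_ℓ(σ)` for a permutation `σ` of `ℓ` letters. -/
def piPerm {ℓ : ℕ} (σ : Equiv.Perm (Fin ℓ)) : ℤ :=
  piW ((List.finRange ℓ).map (fun j => (σ j : ℕ)))

/-- Left-nested Lie bracket of a list: `[x₁,[x₂,…,[x_{k-1},x_k]…]]`. -/
def nestedBracket {L : Type*} [LieRing L] : List L → L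
  | [] => 0
  | [x] => x
  | x :: y :: l => ⁅x, nestedBracket (y :: l)⁆

/-- reversal symmetry `π_ℓ(σ₁⋯σ_ℓ) = (-1)^{ℓ+1} π_ℓ(σ_ℓ⋯σ₁)`. -/
theorem piW_reverse {ℓ : ℕ} (hℓ : 1 ≤ ℓ) (σ : Equiv.Perm (Fin ℓ)) :
    piW ((List.finRange ℓ).map fun j => (σ j : ℕ)) =
      (-1) ^ (ℓ + 1) * piW (((List.finRange ℓ).map fun j => (σ j : ℕ)).reverse) := by
  have hnd : ((List.finRange ℓ).map fun j => (σ j : ℕ)).Nodup :=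
    (List.nodup_finRange ℓ).map (Fin.val_injective.comp σ.injective)
  have hne : ((List.finRange ℓ).map fun j => (σ j : ℕ)) ≠ [] := by
    intro h
    have := congrArg List.length h
    simp at this
    omega
  have h := piW_rev _ hnd hne
  simpa using h
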